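/- Let (Ω, P) be a probability space and g_1, …, g_N (N ≥ 1) independent exponentially distributed random variables with common mean ḡ > 0. Let γ̄ > 0, L > 0, α_c ∈ (0,1), α_p > 0, β ≥ 0, γ_th,c > 0, γ_th,p > 0 with (1−α_c)·γ_th,c < α_c and β·γ_th,p < α_p, and set g = max_i g_i, γ̂_c = γ_th,c/(γ̄·L·(α_c − (1−α_c)·γ_th,c)), γ̂_p = γ_th,p/(γ̄·L·(α_p − β·γ_th,p)), γ_th = max(γ̂_c, γ̂_p). Then the outage probability P({ω : ¬( (γ̄·α_c·L·g)/(γ̄·(1−α_c)·L·g + 1) > γ_th,c ∧ (γ̄·α_p·L·g)/(γ̄·β·L·g + 1) > γ_th,p )}) equals (1 − e^{−γ_th/ḡ})^N. -/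

import Mathlib

open MeasureTheory ProbabilityTheory

lemma sinr_iff (γbar Lp α γth c x : ℝ) (hγ : 0 < γbar) (hL : 0 < Lp)
    (hc : 0 ≤ c) (hth : 0 < γth) (hx : 0 ≤ x) (hcond : c * γth < α) :
    γbar * α * Lp * x / (γbar * c * Lp * x + 1) > γth ↔
      γth / (γbar * Lp * (α - c * γth)) < x := by
  have hden : 0 < γbar * c * Lp * x + 1 := by positivity
  have hcoef : 0 < γbar * Lp * (α - c * γth) := by
    have : 0 < α - c * γth := by linarith
    positivity
  rw [gt_iff_lt, lt_div_iff₀ hden, div_lt_iff₀ hcoef]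
  constructor <;> intro h <;> nlinarith

/-- Outage probability of a FAS-RSMA user with `N` independent
exponential port gains of mean `ḡ`: with equivalent gain `g = maxᵢ gᵢ`, the
probability that the common- or private-message SINR falls below its
threshold equals `(1 − e^{−γ_th/ḡ})^N`, where `γ_th` is the maximum of the
two equivalent gain thresholds. -/
theorem fas_rsma_iid_outage_probability
    {Ω : Type*} [MeasurableSpace Ω] (P : Measure Ω) [IsProbabilityMeasure P]
    (gbar : ℝ) (hgbar : 0 < gbar) (N : ℕ) (hN : 1 ≤ N)
    (g : Fin N → Ω → ℝ) (hg : ∀ i, Measurable (g i))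
    (hindep : iIndepFun g P)
    (hcdf : ∀ i : Fin N, ∀ x : ℝ, 0 ≤ x →
      P {ω | g i ω ≤ x} = ENNReal.ofReal (1 - Real.exp (-x / gbar)))
    (hpos : ∀ i ω, 0 ≤ g i ω)
    (γbar L αc αp β γthc γthp : ℝ)
    (hγ : 0 < γbar) (hL : 0 < L) (hαc : αc ∈ Set.Ioo (0 : ℝ) 1)
    (hαp : 0 < αp) (hβ : 0 ≤ β) (hthc : 0 < γthc) (hthp : 0 < γthp)
    (hcondc : (1 - αc) * γthc < αc) (hcondp : β * γthp < αp) :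
    P {ω | ¬ ((γbar * αc * L *
          (Finset.univ.sup' (Finset.univ_nonempty_iff.mpr ⟨⟨0, hN⟩⟩)
            (fun i => g i ω))) /
        (γbar * (1 - αc) * L *
          (Finset.univ.sup' (Finset.univ_nonempty_iff.mpr ⟨⟨0, hN⟩⟩)
            (fun i => g i ω)) + 1) > γthc ∧
        (γbar * αp * L *
          (Finset.univ.sup' (Finset.univ_nonempty_iff.mpr ⟨⟨0, hN⟩⟩)
            (fun i => g i ω))) /
        (γbar * β * L *
          (Finset.univ.sup' (Finset.univ_nonempty_iff.mpr ⟨⟨0, hN⟩⟩)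
            (fun i => g i ω)) + 1) > γthp)} =
      ENNReal.ofReal (1 - Real.exp
        (-(max (γthc / (γbar * L * (αc - (1 - αc) * γthc)))
               (γthp / (γbar * L * (αp - β * γthp)))) / gbar)) ^ N := by
  obtain ⟨hαc0, hαc1⟩ := hαc
  set γhatc := γthc / (γbar * L * (αc - (1 - αc) * γthc)) with hγhatc
  set γhatp := γthp / (γbar * L * (αp - β * γthp)) with hγhatp
  set γth := max γhatc γhatp with hγth
  have hne : (Finset.univ : Finset (Fin N)).Nonempty :=
    Finset.univ_nonempty_iff.mpr ⟨⟨0, hN⟩⟩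
  have hth0 : 0 ≤ γth := by
    have : 0 ≤ γhatc := by
      have : 0 < αc - (1 - αc) * γthc := by linarith
      positivity
    exact le_trans this (le_max_left _ _)
  have hset : {ω | ¬ ((γbar * αc * L * (Finset.univ.sup' hne (fun i => g i ω))) /
        (γbar * (1 - αc) * L * (Finset.univ.sup' hne (fun i => g i ω)) + 1) > γthc ∧
        (γbar * αp * L * (Finset.univ.sup' hne (fun i => g i ω))) /
        (γbar * β * L * (Finset.univ.sup' hne (fun i => g i ω)) + 1) > γthp)} =
      ⋂ i, {ω | g i ω ≤ γth} := by
    ext ω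
    set s := Finset.univ.sup' hne (fun i => g i ω) with hs
    have hs0 : 0 ≤ s := le_trans (hpos ⟨0, hN⟩ ω) (Finset.le_sup' (fun i => g i ω) (Finset.mem_univ ⟨0, hN⟩))
    have h1 : γbar * αc * L * s / (γbar * (1 - αc) * L * s + 1) > γthc ↔ γhatc < s :=
      sinr_iff γbar L αc γthc (1 - αc) s hγ hL (by linarith) hthc hs0 hcondc
    have h2 : γbar * αp * L * s / (γbar * β * L * s + 1) > γthp ↔ γhatp < s :=
      sinr_iff γbar L αp γthp β s hγ hL hβ hthp hs0 hcondp
    simp only [Set.mem_setOf_eq, Set.mem_iInter, ← hs, h1, h2]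
    constructor
    · intro h i
      have hsle : s ≤ γth := by
        rcases not_and_or.mp h with h | h
        · exact le_trans (not_lt.mp h) (le_max_left _ _)
        · exact le_trans (not_lt.mp h) (le_max_right _ _)
      exact le_trans (Finset.le_sup' (fun i => g i ω) (Finset.mem_univ i)) hsle
    · intro h
      have hsle : s ≤ γth := Finset.sup'_le _ _ fun i _ => h i
      rw [not_and_or]
      rcases le_max_iff.mp hsle with h' | h'
      · exact Or.inl (not_lt.mpr h')
      · exact Or.inr (not_lt.mpr h')
  have key : P (⋂ i, {ω | g i ω ≤ γth}) = ∏ i : Fin N, P {ω | g i ω ≤ γth} :=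
    hindep.meas_iInter (fun i => ⟨Set.Iic γth, measurableSet_Iic, rfl⟩)
  rw [hset, key]
  simp only [hcdf _ γth hth0]
  rw [Finset.prod_const, Finset.card_univ, Fintype.card_fin]
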